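/- Let T_m denote the number of ordered trees of type m. For every finitely supported m : ℕ+ →₀ ℕ with m ≠ 0, T_m = Σ_{n ≥ 1} Σ_{(m_1, …, m_n)} ∏_{i=1}^{n} T_{m_i}, where for each n the inner sum ranges over all n-tuples (m_1, …, m_n) of finitely supported functions ℕ+ →₀ ℕ with e_n + m_1 + ⋯ + m_n = m. Moreover T_0 = 1, where 0 is the zero function. -/

import Mathlib

/-- Ordered trees: a root node with an ordered (possibly empty) list of children. -/
inductive OrderedTree : Type
  | node : List OrderedTree → OrderedTree

namespace OrderedTree

/-- The list of children of the root of an ordered tree. -/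
def children : OrderedTree → List OrderedTree
  | node ts => ts

/-- A node is a leaf if it has no children. -/
def isLeaf : OrderedTree → Bool
  | node ts => ts.isEmpty

/-- The number of nodes of a tree having exactly `n` children. -/
def countDeg (n : ℕ) : OrderedTree → ℕ
  | node ts => (if ts.length = n then 1 else 0) + (ts.attach.map fun t => countDeg n t.1).sum
  decreasing_by simp [OrderedTree.node.sizeOf_spec]; exact Nat.lt_add_left 1 (List.sizeOf_lt_of_mem t.2)

/-- The post-order traversal of an ordered tree: the post-order traversals of the
subtrees, in order, followed by the root. -/
def postorder : OrderedTree → List OrderedTree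
  | node ts => (ts.attach.map fun t => postorder t.1).flatten ++ [node ts]
  decreasing_by simp [OrderedTree.node.sizeOf_spec]; exact Nat.lt_add_left 1 (List.sizeOf_lt_of_mem t.2)

end OrderedTree

/-- An ordered tree has type `m : ℕ+ →₀ ℕ` if for every `n ≥ 1` it has exactly
`m n` nodes with exactly `n` children. -/
def hasType (τ : OrderedTree) (m : ℕ+ →₀ ℕ) : Prop :=
  ∀ n : ℕ+, OrderedTree.countDeg (n : ℕ) τ = m n

/-- `treeCount m` is the number of ordered trees of type `m`. -/
noncomputable def treeCount (m : ℕ+ →₀ ℕ) : ℕ :=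
  Nat.card {τ : OrderedTree // hasType τ m}

namespace OrderedTree

theorem ind {P : OrderedTree → Prop}
    (h : ∀ ts : List OrderedTree, (∀ t ∈ ts, P t) → P (node ts)) : ∀ t, P t
  | node ts => h ts (fun t ht => ind h t)
  decreasing_by simp [OrderedTree.node.sizeOf_spec]; exact Nat.lt_add_left 1 (List.sizeOf_lt_of_mem ht)

noncomputable def treeType : OrderedTree → (ℕ+ →₀ ℕ)
  | node ts =>
    (if h : ts.length = 0 then 0 else Finsupp.single ⟨ts.length, Nat.pos_of_ne_zero h⟩ 1)
      + (ts.attach.map fun t => treeType t.1).sum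
  decreasing_by simp [OrderedTree.node.sizeOf_spec]; exact Nat.lt_add_left 1 (List.sizeOf_lt_of_mem t.2)

theorem treeType_node (ts : List OrderedTree) :
    treeType (node ts) =
      (if h : ts.length = 0 then 0 else Finsupp.single ⟨ts.length, Nat.pos_of_ne_zero h⟩ 1)
        + (ts.map treeType).sum := by
  rw [treeType]
  congr 1
  rw [List.attach_map_val]   -- maybe wrong name

theorem treeType_apply (t : OrderedTree) (n : ℕ+) : countDeg (n : ℕ) t = treeType t n := by
  induction t using ind with
  | h ts ih =>
    have hsum : ((ts.map treeType).sum) n = (ts.map fun t => treeType t n).sum := by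
      clear ih
      induction ts with
      | nil => simp
      | cons a l ihl => simp only [List.map_cons, List.sum_cons, Finsupp.add_apply, ihl]
    rw [countDeg, treeType_node, Finsupp.add_apply, hsum, List.attach_map_val]
    congr 1
    · by_cases h : ts.length = 0
      · have h2 : ¬ (0 : ℕ) = (n:ℕ) := by have := n.pos; omega
        simp [h, h2]
      · have key : ((⟨ts.length, Nat.pos_of_ne_zero h⟩ : ℕ+) = n) ↔ ts.length = (n:ℕ) :=
          Subtype.ext_iff
        rw [dif_neg h]
        exact (by classical exact ((Finsupp.single_apply (a := (⟨ts.length, Nat.pos_of_ne_zero h⟩ : ℕ+)) (a' := n) (b := 1)).trans (if_congr key rfl rfl)).symm)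
    · exact congrArg List.sum (List.map_congr_left fun t ht => ih t ht)

noncomputable def weight : (ℕ+ →₀ ℕ) →+ ℕ :=
  Finsupp.liftAddHom fun n => AddMonoidHom.mulLeft (n : ℕ)

theorem weight_single (n : ℕ+) (c : ℕ) : weight (Finsupp.single n c) = (n : ℕ) * c :=
  Finsupp.liftAddHom_apply_single _ n c

def size : OrderedTree → ℕ
  | node ts => 1 + (ts.attach.map fun t => size t.1).sum
  decreasing_by simp [OrderedTree.node.sizeOf_spec]; exact Nat.lt_add_left 1 (List.sizeOf_lt_of_mem t.2)

theorem size_node (ts : List OrderedTree) : size (node ts) = 1 + (ts.map size).sum := by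
  rw [size, List.attach_map_val]

theorem one_le_size : ∀ t, 1 ≤ size t
  | node ts => by rw [size_node]; omega

theorem size_eq (t : OrderedTree) : size t = 1 + weight (treeType t) := by
  induction t using ind with
  | h ts ih =>
    rw [size_node, treeType_node, map_add]
    have h1 : weight ((ts.map treeType).sum) = (ts.map fun t => weight (treeType t)).sum := by
      rw [map_list_sum weight, List.map_map]; rfl
    have h2 : (ts.map size).sum = ts.length + (ts.map fun t => weight (treeType t)).sum := by
      clear h1
      induction ts with
      | nil => simp
      | cons a l ihl =>
        simp only [List.map_cons, List.sum_cons, List.length_cons,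
          ihl (fun t ht => ih t (List.mem_cons_of_mem a ht))]
        rw [ih a List.mem_cons_self]
        ring
    rw [h1, h2]
    by_cases h : ts.length = 0
    · simp [h]
    · rw [dif_neg h]; erw [weight_single]
      rw [mul_one]
      exact rfl

theorem hasType_iff (t : OrderedTree) (m : ℕ+ →₀ ℕ) : hasType t m ↔ treeType t = m := by
  constructor
  · intro h; ext n; rw [← treeType_apply]; exact h n
  · intro h n; rw [treeType_apply, h]

theorem finite_size_le (N : ℕ) : {t : OrderedTree | size t ≤ N}.Finite := by
  induction N with
  | zero =>
    convert Set.finite_empty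
    ext t
    simp only [Set.mem_setOf_eq, Set.mem_empty_iff_false, iff_false, not_le]
    exact one_le_size t
  | succ N ih =>
    haveI : Finite {t : OrderedTree // size t ≤ N} := ih.to_subtype
    have hL : {l : List OrderedTree | l.length ≤ N ∧ ∀ t ∈ l, size t ≤ N}.Finite := by
      apply Set.Finite.subset
        (((List.finite_length_le {t : OrderedTree // size t ≤ N} N).image
          (fun l => l.map Subtype.val)))
      rintro l ⟨hlen, hmem⟩
      refine ⟨l.attach.map fun x => ⟨x.1, hmem x.1 x.2⟩, by simpa using hlen, ?_⟩
      simp [List.map_map, List.attach_map_val]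
    apply Set.Finite.subset (hL.image node)
    rintro t ht
    obtain ⟨ts⟩ := t
    rw [Set.mem_setOf_eq, size_node] at ht
    have hlenle : ts.length ≤ (ts.map size).sum := by
      clear ht
      induction ts with
      | nil => simp
      | cons a l ihl =>
        simp only [List.length_cons, List.map_cons, List.sum_cons]
        have := one_le_size a
        omega
    refine ⟨ts, ⟨by omega, fun t htm => ?_⟩, rfl⟩
    have hmem : size t ∈ ts.map size := List.mem_map_of_mem (f := size) htm
    have := List.le_sum_of_mem hmem
    omega

theorem finite_type (m : ℕ+ →₀ ℕ) : {t : OrderedTree | treeType t = m}.Finite :=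
  (finite_size_le (1 + weight m)).subset fun t ht => by
    rw [Set.mem_setOf_eq, size_eq, ht]


theorem type_zero_iff (t : OrderedTree) : treeType t = 0 ↔ t = node [] := by
  constructor
  · intro h
    obtain ⟨ts⟩ := t
    have hs := size_eq (node ts)
    rw [h, map_zero, size_node] at hs
    match ts, hs with
    | [], _ => rfl
    | a :: l, hs => simp at hs; have := one_le_size a; omega
  · rintro rfl
    rw [treeType_node]
    simp

theorem sum_map_treeType (ts : List OrderedTree) :
    (ts.map treeType).sum = ∑ i : Fin ts.length, treeType (ts.get i) := by
  conv_lhs => rw [← List.ofFn_get ts]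
  rw [List.map_ofFn, List.sum_ofFn]
  rfl

noncomputable def rootData (t : OrderedTree) : Σ n : ℕ+, (Fin (n : ℕ) → (ℕ+ →₀ ℕ)) :=
  match t with
  | node ts =>
    if h : ts.length = 0 then ⟨1, fun _ => 0⟩
    else ⟨⟨ts.length, Nat.pos_of_ne_zero h⟩, fun i => treeType (ts.get ⟨i.1, i.2⟩)⟩

theorem sigma_ext {X : Type*} {a b : ℕ+} (h : a = b) {g : Fin (a : ℕ) → X}
    {f : Fin (b : ℕ) → X} (h2 : ∀ i : Fin (b : ℕ), g (Fin.cast (by rw [h]) i) = f i) :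
    (⟨a, g⟩ : Σ n : ℕ+, Fin (n : ℕ) → X) = ⟨b, f⟩ := by
  subst h
  have : g = f := funext fun i => h2 i
  rw [this]

theorem sigma_eq_iff {X : Type*} {a b : ℕ+} {g : Fin (a : ℕ) → X} {f : Fin (b : ℕ) → X} :
    (⟨a, g⟩ : Σ n : ℕ+, Fin (n : ℕ) → X) = ⟨b, f⟩ ↔
      ∃ h : a = b, ∀ i : Fin (b : ℕ), g (Fin.cast (by rw [h]) i) = f i := by
  constructor
  · intro h
    have h1 : a = b := congrArg Sigma.fst h
    subst h1
    have h3 : g = f := by injection h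
    subst h3
    exact ⟨rfl, fun i => rfl⟩
  · rintro ⟨h1, h2⟩
    exact sigma_ext h1 h2

theorem card_fiber (m : ℕ+ →₀ ℕ) (n : ℕ+) (f : Fin (n : ℕ) → (ℕ+ →₀ ℕ))
    (hf : Finsupp.single n 1 + ∑ i, f i = m) :
    Nat.card {τ : OrderedTree // treeType τ = m ∧ rootData τ = ⟨n, f⟩} =
      ∏ i, Nat.card {τ : OrderedTree // treeType τ = f i} := by
  have hmn : m n ≠ 0 := by
    rw [← hf]
    simp [Finsupp.add_apply, Finsupp.single_apply]
  have hlen : ∀ v : ∀ i : Fin (n : ℕ), {τ : OrderedTree // treeType τ = f i},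
      (List.ofFn fun i => (v i).1).length = (n : ℕ) := fun v => List.length_ofFn
  have hne : ∀ v : ∀ i : Fin (n : ℕ), {τ : OrderedTree // treeType τ = f i},
      ¬ (List.ofFn fun i => (v i).1).length = 0 := fun v => by
    rw [hlen v]; exact n.pos.ne'
  have key1 : ∀ v : ∀ i : Fin (n : ℕ), {τ : OrderedTree // treeType τ = f i},
      treeType (node (List.ofFn fun i => (v i).1)) = m := by
    intro v
    rw [treeType_node, dif_neg (hne v)]
    have h1 : (⟨(List.ofFn fun i => (v i).1).length, Nat.pos_of_ne_zero (hne v)⟩ : ℕ+) = n :=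
      Subtype.ext (hlen v)
    rw [h1, List.map_ofFn, List.sum_ofFn, ← hf]
    congr 1
    exact Finset.sum_congr rfl fun i _ => (v i).2
  have key2 : ∀ v : ∀ i : Fin (n : ℕ), {τ : OrderedTree // treeType τ = f i},
      rootData (node (List.ofFn fun i => (v i).1)) = ⟨n, f⟩ := by
    intro v
    rw [rootData, dif_neg (hne v)]
    refine sigma_ext (Subtype.ext (hlen v)) fun i => ?_
    rw [List.get_ofFn]
    exact (v i).2
  rw [← Nat.card_pi]
  refine (Nat.card_congr (Equiv.ofBijective
    (fun v => ⟨node (List.ofFn fun i => (v i).1), key1 v, key2 v⟩) ⟨?_, ?_⟩)).symm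
  · -- injective
    intro v v' h
    have h2 : (List.ofFn fun i => (v i).1) = List.ofFn fun i => (v' i).1 :=
      congrArg (fun x : {τ : OrderedTree // treeType τ = m ∧ rootData τ = ⟨n, f⟩} =>
        children x.1) h
    funext i
    exact Subtype.ext (congrFun (List.ofFn_injective h2) i)
  · -- surjective
    rintro ⟨τ, hτ1, hτ2⟩
    obtain ⟨ts⟩ := τ
    have h0 : ts.length ≠ 0 := by
      intro h0
      rw [List.length_eq_zero_iff] at h0
      subst h0
      rw [(type_zero_iff _).mpr rfl] at hτ1
      rw [← hτ1] at hmn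
      simp at hmn
    rw [rootData, dif_neg h0] at hτ2; erw [sigma_eq_iff] at hτ2
    obtain ⟨h1, h2⟩ := hτ2
    have hlen2 : ts.length = (n : ℕ) := congrArg (fun x : ℕ+ => (x : ℕ)) h1
    refine ⟨fun i => ⟨ts.get ⟨i.1, by omega⟩, h2 i⟩, ?_⟩
    refine Subtype.ext ?_
    show node _ = node ts
    congr 1
    refine List.ext_get (by simp [hlen2]) fun i hi1 hi2 => ?_
    rw [List.get_ofFn]
    rfl


theorem treeCount_eq (g : ℕ+ →₀ ℕ) : treeCount g = Nat.card {τ : OrderedTree // treeType τ = g} :=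
  Nat.card_congr (Equiv.subtypeEquivRight fun t => hasType_iff t g)

theorem treeCount_zero : treeCount 0 = 1 := by
  rw [treeCount_eq]
  haveI : Nonempty {τ : OrderedTree // treeType τ = 0} := ⟨⟨node [], (type_zero_iff _).mpr rfl⟩⟩
  haveI : Subsingleton {τ : OrderedTree // treeType τ = 0} := ⟨fun x y => Subtype.ext (by
    rw [(type_zero_iff _).mp x.2, (type_zero_iff _).mp y.2])⟩
  exact Nat.card_unique

theorem finite_cond (m : ℕ+ →₀ ℕ) (n : ℕ+) :
    {f : Fin (n : ℕ) → (ℕ+ →₀ ℕ) | Finsupp.single n 1 + ∑ i, f i = m}.Finite := by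
  apply Set.Finite.subset (Set.Finite.pi fun _ : Fin (n : ℕ) => Set.finite_Icc (0 : ℕ+ →₀ ℕ) m)
  intro f hf
  rw [Set.mem_setOf_eq] at hf
  rw [Set.mem_univ_pi]
  intro i
  rw [Set.mem_Icc]
  refine ⟨zero_le, ?_⟩
  intro k
  calc f i k ≤ ∑ j, f j k :=
        Finset.single_le_sum (f := fun j => f j k) (fun _ _ => Nat.zero_le _) (Finset.mem_univ i)
    _ = (∑ j, f j) k := by rw [Finsupp.finset_sum_apply]
    _ ≤ m k := by rw [← hf]; simp
    
theorem main_count (m : ℕ+ →₀ ℕ) (hm : m ≠ 0) :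
    treeCount m = ∑ n ∈ m.support, ∑ f ∈ (finite_cond m n).toFinset, ∏ i, treeCount (f i) := by
  classical
  rw [treeCount_eq]
  have hS := finite_type m
  have hcard : Nat.card {τ : OrderedTree // treeType τ = m} = hS.toFinset.card :=
    Nat.card_eq_card_finite_toFinset hS
  rw [hcard]
  rw [Finset.card_eq_sum_card_fiberwise
    (f := rootData) (t := m.support.sigma fun n => (finite_cond m n).toFinset) ?_]
  · rw [Finset.sum_sigma]
    refine Finset.sum_congr rfl fun n _ => Finset.sum_congr rfl fun f hf => ?_
    rw [Set.Finite.mem_toFinset, Set.mem_setOf_eq] at hf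
    have h2 : ∏ i, treeCount (f i) = ∏ i, Nat.card {τ : OrderedTree // treeType τ = f i} :=
      Finset.prod_congr rfl fun i _ => treeCount_eq (f i)
    rw [h2, ← card_fiber m n f hf]
    have h3 : Nat.card {τ : OrderedTree // treeType τ = m ∧ rootData τ = ⟨n, f⟩} =
        Nat.card {τ : OrderedTree // τ ∈ hS.toFinset.filter fun τ => rootData τ = ⟨n, f⟩} :=
      Nat.card_congr (Equiv.subtypeEquivRight fun τ => by
        simp [Set.Finite.mem_toFinset, and_comm])
    rw [h3, Nat.card_eq_finsetCard]
  · intro τ hτ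
    rw [Finset.mem_coe, Set.Finite.mem_toFinset, Set.mem_setOf_eq] at hτ
    obtain ⟨ts⟩ := τ
    have h0 : ts.length ≠ 0 := by
      intro h0
      rw [List.length_eq_zero_iff] at h0
      subst h0
      apply hm
      rw [← hτ, (type_zero_iff (node [])).mpr rfl]
    rw [rootData, dif_neg h0, Finset.mem_coe, Finset.mem_sigma]
    have hty : treeType (node ts) =
        (Finsupp.single (⟨ts.length, Nat.pos_of_ne_zero h0⟩ : ℕ+) 1 : ℕ+ →₀ ℕ)
          + ∑ i : Fin ts.length, treeType (ts.get i) := by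
      rw [treeType_node, dif_neg h0, sum_map_treeType]
    constructor
    · rw [Finsupp.mem_support_iff, ← hτ, hty]
      erw [Finsupp.add_apply, Finsupp.single_eq_same]; omega
    · rw [Set.Finite.mem_toFinset, Set.mem_setOf_eq, ← hτ, hty]
      rfl

end OrderedTree

/-- `T_0 = 1` and for `m ≠ 0`,
`T_m = Σ_{n ≥ 1} Σ_{(m₁,…,mₙ) : eₙ + m₁ + ⋯ + mₙ = m} Π_i T_{mᵢ}`. -/
theorem treeCount_recurrence :
    treeCount 0 = 1 ∧
      ∀ m : ℕ+ →₀ ℕ, m ≠ 0 →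
        treeCount m =
          ∑ᶠ n : ℕ+, ∑ᶠ (f : Fin (n : ℕ) → (ℕ+ →₀ ℕ))
            (_ : Finsupp.single n 1 + ∑ i, f i = m), ∏ i, treeCount (f i) := by
  refine ⟨OrderedTree.treeCount_zero, fun m hm => ?_⟩
  classical
  rw [OrderedTree.main_count m hm]
  have h1 : ∀ n : ℕ+,
      (∑ᶠ (f : Fin (n : ℕ) → (ℕ+ →₀ ℕ)) (_ : Finsupp.single n 1 + ∑ i, f i = m),
        ∏ i, treeCount (f i)) =
      ∑ f ∈ (OrderedTree.finite_cond m n).toFinset, ∏ i, treeCount (f i) := by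
    intro n
    have e1 : ∀ f : Fin (n : ℕ) → (ℕ+ →₀ ℕ),
        (∑ᶠ (_ : Finsupp.single n 1 + ∑ i, f i = m), ∏ i, treeCount (f i)) =
          if Finsupp.single n 1 + ∑ i, f i = m then ∏ i, treeCount (f i) else 0 :=
      fun f => finsum_eq_if
    rw [finsum_congr e1]
    rw [finsum_eq_sum_of_support_subset _ (s := (OrderedTree.finite_cond m n).toFinset) ?_]
    · refine Finset.sum_congr rfl fun f hf => ?_
      rw [Set.Finite.mem_toFinset, Set.mem_setOf_eq] at hf
      rw [if_pos hf]
    · intro f hf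
      rw [Function.mem_support] at hf
      rw [Finset.mem_coe, Set.Finite.mem_toFinset, Set.mem_setOf_eq]
      by_contra h
      rw [if_neg h] at hf
      exact hf rfl
  rw [finsum_congr h1]
  refine (finsum_eq_sum_of_support_subset _ ?_).symm
  intro n hn
  rw [Function.mem_support] at hn
  have : ((OrderedTree.finite_cond m n).toFinset).Nonempty := by
    by_contra h
    rw [Finset.not_nonempty_iff_eq_empty] at h
    rw [h, Finset.sum_empty] at hn
    exact hn rfl
  obtain ⟨f, hf⟩ := this
  rw [Set.Finite.mem_toFinset, Set.mem_setOf_eq] at hf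
  rw [Finset.mem_coe, Finsupp.mem_support_iff, ← hf]
  simp [Finsupp.add_apply, Finsupp.single_apply]
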